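/- An integer n ≠ 0 is invertible in the ring R_P if and only if every prime factor of n belongs to P. -/
import Mathlib


/-- The subring of ℚ generated by the inverses of the primes in `P`. -/
def RP (P : Set ℕ) : Subring ℚ :=
  Subring.closure {q : ℚ | ∃ p ∈ P, q = (p : ℚ)⁻¹}

/-- The subring of rationals whose denominator has all prime factors in `P`. -/
def SP (P : Set ℕ) : Subring ℚ where
  carrier := {q : ℚ | ∀ p : ℕ, p.Prime → p ∣ q.den → p ∈ P}
  one_mem' := by intro p hp hd; simp at hd; exact absurd hd hp.ne_one
  zero_mem' := by intro p hp hd; simp at hd; exact absurd hd hp.ne_one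
  add_mem' := by
    intro a b ha hb p hp hd
    have := hd.trans (Rat.add_den_dvd a b)
    rcases (Nat.Prime.dvd_mul hp).1 this with h | h
    · exact ha p hp h
    · exact hb p hp h
  mul_mem' := by
    intro a b ha hb p hp hd
    have := hd.trans (Rat.mul_den_dvd _ _)
    rcases (Nat.Prime.dvd_mul hp).1 this with h | h
    · exact ha p hp h
    · exact hb p hp h
  neg_mem' := by
    intro a ha p hp hd
    rw [Rat.neg_den] at hd
    exact ha p hp hd

lemma closure_le_SP (P : Set ℕ) (hP : ∀ p ∈ P, p.Prime) : RP P ≤ SP P := by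
  apply Subring.closure_le.2
  rintro q ⟨p, hpP, rfl⟩
  intro r hr hd
  rw [Rat.inv_natCast_den] at hd
  split_ifs at hd with h
  · simp at hd; exact absurd hd hr.ne_one
  · have : r = p := ((Nat.prime_dvd_prime_iff_eq hr (hP p hpP)).1 hd)
    exact this ▸ hpP

lemma inv_mem_RP (P : Set ℕ) (m : ℕ) (hm : ∀ p : ℕ, p.Prime → p ∣ m → p ∈ P) :
    ((m : ℚ)⁻¹) ∈ RP P := by
  rcases eq_or_ne m 0 with rfl | h0
  · simpa using Subring.zero_mem _
  induction m using Nat.strong_induction_on with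
  | _ m ih =>
    rcases eq_or_ne m 1 with rfl | h1
    · simpa using Subring.one_mem _
    · obtain ⟨p, hp, hpd⟩ := Nat.exists_prime_and_dvd h1
      obtain ⟨k, rfl⟩ := hpd
      have hk0 : k ≠ 0 := by rintro rfl; simp at h0
      have hp0 : p ≠ 0 := hp.ne_zero
      have hlt : k < p * k := by
        have h1p : 1 < p := hp.one_lt
        calc k = 1 * k := (one_mul k).symm
        _ < p * k := (Nat.mul_lt_mul_right (Nat.pos_of_ne_zero hk0)).2 h1p
      have hkmem : ((k : ℚ)⁻¹) ∈ RP P := by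
        apply ih k hlt
        · intro q hq hqd; exact hm q hq (hqd.mul_left p)
        · exact hk0
      have hpmem : ((p : ℚ)⁻¹) ∈ RP P :=
        Subring.subset_closure ⟨p, hm p hp ⟨k, rfl⟩, rfl⟩
      have : ((p * k : ℕ) : ℚ)⁻¹ = (p : ℚ)⁻¹ * (k : ℚ)⁻¹ := by
        push_cast; rw [mul_inv]
      rw [this]
      exact Subring.mul_mem _ hpmem hkmem

theorem stmt_4 (P : Set ℕ) (hP : ∀ p ∈ P, p.Prime) (n : ℤ) (hn : n ≠ 0) :
    IsUnit (n : RP P) ↔ ∀ p : ℕ, p.Prime → (p : ℤ) ∣ n → p ∈ P := by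
  constructor
  · rintro ⟨u, hu⟩ p hp hpd
    have hx : ((u⁻¹ : (RP P)ˣ) : RP P).val = ((n : ℚ))⁻¹ := by
      have h1 : ((u : RP P) : ℚ) * ((u⁻¹ : (RP P)ˣ) : RP P).val = 1 := by
        rw [← Subring.coe_mul, ← Units.val_mul, mul_inv_cancel]
        simp
      have hnq : ((u : RP P) : ℚ) = (n : ℚ) := by rw [hu]; simp
      rw [hnq] at h1
      field_simp at h1 ⊢
      linarith [h1]
    have hmem := ((u⁻¹ : (RP P)ˣ) : RP P).2
    rw [hx] at hmem
    have hS := closure_le_SP P hP hmem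
    apply hS p hp
    rw [Rat.inv_intCast_den, if_neg hn]
    simpa using Int.natAbs_dvd_natAbs.2 hpd
  · intro h
    have habs : ((n.natAbs : ℚ))⁻¹ ∈ RP P := by
      apply inv_mem_RP
      intro p hp hpd
      exact h p hp (Int.dvd_natAbs.1 (Int.natCast_dvd_natCast.2 hpd))
    have hmem : ((n : ℚ))⁻¹ ∈ RP P := by
      rcases Int.natAbs_eq n with he | he
      · rw [he, Int.cast_natCast]; exact habs
      · rw [he, Int.cast_neg, Int.cast_natCast, inv_neg]; exact Subring.neg_mem _ habs
    refine isUnit_iff_exists.2 ⟨⟨(n : ℚ)⁻¹, hmem⟩, ?_, ?_⟩ <;>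
    · apply Subtype.ext
      push_cast
      field_simp
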